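/- Let n ∈ ℕ, let a : Fin n → ℂ satisfy ∑_j ‖a_j‖² = 1, let E : Fin n → ℝ, let τ ≥ 0, and set √ε = ‖∑_j ‖a_j‖²·exp(−i·E_j·τ)‖. Then for every p ∈ (0,1], every θ ∈ [−π/2, π/2], and every E_r ∈ ℝ: √ε ≥ cos θ − (A_{p,θ}·∑_{j : E_j ≥ E_r} ‖a_j‖²·(E_j − E_r)^p + A_{p,−θ}·∑_{j : E_j < E_r} ‖a_j‖²·(E_r − E_j)^p)·τ^p. -/

import Mathlib

/-- The set of values `(cos θ - cos x)/(x - θ)^p` for `x ∈ (θ, π)`. -/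
noncomputable def Aset (p θ : ℝ) : Set ℝ :=
  (fun x : ℝ => (Real.cos θ - Real.cos x) / (x - θ) ^ p) '' Set.Ioo θ Real.pi

/-- `A p θ` is the supremum of `(cos θ - cos x)/(x - θ)^p` over `x ∈ (θ, π)`. -/
noncomputable def A (p θ : ℝ) : ℝ := sSup (Aset p θ)

open Real Filter in
lemma cos_lip (u v : ℝ) : Real.cos u - Real.cos v ≤ |u - v| := by
  rw [Real.cos_sub_cos]
  have h1 : |Real.sin ((u + v) / 2)| ≤ 1 := Real.abs_sin_le_one _
  have h2 : |Real.sin ((u - v) / 2)| ≤ |(u - v) / 2| := Real.abs_sin_le_abs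
  calc -2 * Real.sin ((u + v) / 2) * Real.sin ((u - v) / 2)
      ≤ |(-2 * Real.sin ((u + v) / 2)) * Real.sin ((u - v) / 2)| := le_abs_self _
    _ = 2 * |Real.sin ((u + v) / 2)| * |Real.sin ((u - v) / 2)| := by
        rw [abs_mul, abs_mul]; norm_num
    _ ≤ 2 * 1 * |(u - v) / 2| := by
        apply mul_le_mul _ h2 (abs_nonneg _) (by norm_num)
        nlinarith [abs_nonneg (Real.sin ((u + v) / 2))]
    _ = |u - v| := by rw [abs_div]; simp; ring

open Real in
lemma Aset_bddAbove {p θ : ℝ} (hp : p ∈ Set.Ioc (0:ℝ) 1) :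
    BddAbove (Aset p θ) := by
  refine ⟨2 * π, ?_⟩
  rintro v ⟨x, hx, rfl⟩
  have hd : (0:ℝ) < x - θ := by linarith [hx.1]
  have hdp : (0:ℝ) < (x - θ) ^ p := rpow_pos_of_pos hd p
  have hpi : (3:ℝ) < π := pi_gt_three
  rw [div_le_iff₀ hdp]
  have hlip : Real.cos θ - Real.cos x ≤ x - θ := by
    have := cos_lip θ x
    rwa [abs_of_nonpos (by linarith), neg_sub] at this
  rcases le_or_gt (x - θ) 1 with h1 | h1
  · have h2 : (x - θ) ≤ (x - θ) ^ p := by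
      calc (x - θ) = (x - θ) ^ (1:ℝ) := (Real.rpow_one _).symm
        _ ≤ (x - θ) ^ p := Real.rpow_le_rpow_of_exponent_ge hd h1 hp.2
    nlinarith
  · have h2 : (1:ℝ) ≤ (x - θ) ^ p := by
      calc (1:ℝ) = 1 ^ p := (Real.one_rpow p).symm
        _ ≤ (x - θ) ^ p := Real.rpow_le_rpow (by norm_num) h1.le hp.1.le
    have h3 : Real.cos θ - Real.cos x ≤ 2 := by
      have := Real.cos_le_one θ
      have := Real.neg_one_le_cos x
      linarith
    nlinarith

open Real Filter Topology in
lemma one_add_cos_le {p θ : ℝ} (hp : p ∈ Set.Ioc (0:ℝ) 1) (hθ : θ < Real.pi) :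
    Real.cos θ + 1 ≤ A p θ * (Real.pi - θ) ^ p := by
  have hd : (0:ℝ) < π - θ := by linarith
  have hdp : (0:ℝ) < (π - θ) ^ p := rpow_pos_of_pos hd p
  rw [← div_le_iff₀ hdp]
  set f : ℝ → ℝ := fun x => (Real.cos θ - Real.cos x) / (x - θ) ^ p with hf
  have hc : ContinuousAt f π := by
    apply ContinuousAt.div
    · exact (continuous_const.sub Real.continuous_cos).continuousAt
    · exact ((continuous_id.sub continuous_const).continuousAt).rpow_const
        (Or.inl (by simpa using hd.ne'))
    · exact hdp.ne'
  have hne : (𝓝[Set.Ioo θ Real.pi] Real.pi).NeBot := by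
    apply mem_closure_iff_nhdsWithin_neBot.mp
    rw [closure_Ioo hθ.ne]
    exact ⟨hθ.le, le_refl _⟩
  have htend : Tendsto f (𝓝[Set.Ioo θ Real.pi] Real.pi) (𝓝 (f π)) :=
    hc.continuousWithinAt.tendsto
  have hev : ∀ᶠ x in 𝓝[Set.Ioo θ Real.pi] Real.pi, f x ≤ A p θ := by
    filter_upwards [eventually_mem_nhdsWithin] with x hx
    exact le_csSup (Aset_bddAbove hp) ⟨x, hx, rfl⟩
  have := le_of_tendsto htend hev
  simpa [hf, Real.cos_pi, sub_neg_eq_add] using this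

open Real in
lemma A_pos {p θ : ℝ} (hp : p ∈ Set.Ioc (0:ℝ) 1)
    (hθ : θ ∈ Set.Icc (-(Real.pi/2)) (Real.pi/2)) : 0 < A p θ := by
  have hπ : (0:ℝ) < π := pi_pos
  have hθπ : θ < π := lt_of_le_of_lt hθ.2 (by linarith)
  have h := one_add_cos_le hp hθπ
  have hcos : 0 ≤ Real.cos θ := Real.cos_nonneg_of_mem_Icc ⟨by linarith [hθ.1], hθ.2⟩
  have hdp : (0:ℝ) < (π - θ) ^ p := rpow_pos_of_pos (by linarith) p
  nlinarith

open Real in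
lemma key_ineq {p θ : ℝ} (hp : p ∈ Set.Ioc (0:ℝ) 1)
    (hθ : θ ∈ Set.Icc (-(Real.pi/2)) (Real.pi/2)) {y : ℝ} (hy : 0 ≤ y) :
    Real.cos θ - Real.cos (θ + y) ≤ A p θ * y ^ p := by
  have hπ : (0:ℝ) < π := pi_pos
  have hθπ : θ < π := lt_of_le_of_lt hθ.2 (by linarith)
  have hA := A_pos hp hθ
  rcases eq_or_lt_of_le hy with rfl | hy0
  · simp [Real.zero_rpow hp.1.ne']
  rcases lt_or_ge y (π - θ) with hsmall | hbig
  · have hmem : θ + y ∈ Set.Ioo θ π := ⟨by linarith, by linarith⟩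
    have hle : (Real.cos θ - Real.cos (θ + y)) / ((θ + y) - θ) ^ p ≤ A p θ :=
      le_csSup (Aset_bddAbove hp) ⟨θ + y, hmem, rfl⟩
    have hsimp : (θ + y) - θ = y := by ring
    rw [hsimp, div_le_iff₀ (rpow_pos_of_pos hy0 p)] at hle
    exact hle
  · have h1 := one_add_cos_le hp hθπ
    have h2 : (π - θ) ^ p ≤ y ^ p := Real.rpow_le_rpow (by linarith) hbig hp.1.le
    have h3 : A p θ * (π - θ) ^ p ≤ A p θ * y ^ p :=
      mul_le_mul_of_nonneg_left h2 hA.le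
    have h4 : -1 ≤ Real.cos (θ + y) := Real.neg_one_le_cos _
    linarith

theorem stmt12 (n : ℕ) (a : Fin n → ℂ) (ha : ∑ j, ‖a j‖ ^ 2 = 1)
    (E : Fin n → ℝ) (τ : ℝ) (hτ : 0 ≤ τ)
    (p θ Er : ℝ) (hp : p ∈ Set.Ioc (0 : ℝ) 1)
    (hθ : θ ∈ Set.Icc (-(Real.pi / 2)) (Real.pi / 2)) :
    Real.cos θ -
      (A p θ * ∑ j ∈ Finset.univ.filter (fun j => Er ≤ E j),
          ‖a j‖ ^ 2 * (E j - Er) ^ p +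
        A p (-θ) * ∑ j ∈ Finset.univ.filter (fun j => E j < Er),
          ‖a j‖ ^ 2 * (Er - E j) ^ p) * τ ^ p ≤
    ‖∑ j, ((‖a j‖ ^ 2 : ℝ) : ℂ) * Complex.exp (-Complex.I * (E j : ℂ) * (τ : ℂ))‖ := by
  have hθ' : -θ ∈ Set.Icc (-(Real.pi / 2)) (Real.pi / 2) := ⟨by linarith [hθ.2], by linarith [hθ.1]⟩
  set z : ℂ := ∑ j, ((‖a j‖ ^ 2 : ℝ) : ℂ) * Complex.exp (-Complex.I * (E j : ℂ) * (τ : ℂ)) with hz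
  set c : ℂ := Complex.exp (((Er * τ - θ : ℝ) : ℂ) * Complex.I) with hc
  have hre : (c * z).re ≤ ‖z‖ := by
    calc (c * z).re ≤ ‖c * z‖ := Complex.re_le_norm _
      _ = ‖c‖ * ‖z‖ := norm_mul _ _
      _ = ‖z‖ := by rw [Complex.norm_exp_ofReal_mul_I, one_mul]
  have hterm : ∀ j, (c * (((‖a j‖ ^ 2 : ℝ) : ℂ) * Complex.exp (-Complex.I * (E j : ℂ) * (τ : ℂ)))).re
      = ‖a j‖ ^ 2 * Real.cos (θ + (E j - Er) * τ) := by
    intro j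
    have heq : c * (((‖a j‖ ^ 2 : ℝ) : ℂ) * Complex.exp (-Complex.I * (E j : ℂ) * (τ : ℂ)))
        = ((‖a j‖ ^ 2 : ℝ) : ℂ) * Complex.exp (((-(θ + (E j - Er) * τ) : ℝ) : ℂ) * Complex.I) := by
      rw [hc, mul_comm, mul_assoc, ← Complex.exp_add]
      congr 2
      push_cast
      ring
    rw [heq, Complex.re_ofReal_mul, Complex.exp_ofReal_mul_I_re, Real.cos_neg]
  have hcz : (c * z).re = ∑ j, ‖a j‖ ^ 2 * Real.cos (θ + (E j - Er) * τ) := by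
    rw [hz, Finset.mul_sum, Complex.re_sum]
    exact Finset.sum_congr rfl fun j _ => hterm j
  -- split sums
  set s₁ := Finset.univ.filter (fun j => Er ≤ E j) with hs₁
  set s₂ := Finset.univ.filter (fun j => ¬ Er ≤ E j) with hs₂
  have hs₂' : s₂ = Finset.univ.filter (fun j => E j < Er) := by
    simp [hs₂, not_le]
  have hsplit : ∀ f : Fin n → ℝ, ∑ j, f j = ∑ j ∈ s₁, f j + ∑ j ∈ s₂, f j :=
    fun f => (Finset.sum_filter_add_sum_filter_not Finset.univ _ f).symm
  -- pointwise bounds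
  have hb₁ : ∀ j ∈ s₁, ‖a j‖ ^ 2 * Real.cos θ
      - A p θ * (‖a j‖ ^ 2 * (E j - Er) ^ p) * τ ^ p
      ≤ ‖a j‖ ^ 2 * Real.cos (θ + (E j - Er) * τ) := by
    intro j hj
    have hje : Er ≤ E j := by simpa [hs₁] using hj
    have hy : 0 ≤ (E j - Er) * τ := mul_nonneg (by linarith) hτ
    have := key_ineq hp hθ hy
    rw [Real.mul_rpow (by linarith) hτ] at this
    have hq : (0:ℝ) ≤ ‖a j‖ ^ 2 := by positivity
    nlinarith [mul_le_mul_of_nonneg_left this hq]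
  have hb₂ : ∀ j ∈ s₂, ‖a j‖ ^ 2 * Real.cos θ
      - A p (-θ) * (‖a j‖ ^ 2 * (Er - E j) ^ p) * τ ^ p
      ≤ ‖a j‖ ^ 2 * Real.cos (θ + (E j - Er) * τ) := by
    intro j hj
    have hje : E j < Er := by simpa [hs₂, not_le] using hj
    have hy : 0 ≤ (Er - E j) * τ := mul_nonneg (by linarith) hτ
    have hk := key_ineq hp hθ' hy
    rw [Real.mul_rpow (by linarith) hτ, Real.cos_neg] at hk
    have hcoseq : Real.cos (-θ + (Er - E j) * τ) = Real.cos (θ + (E j - Er) * τ) := by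
      rw [← Real.cos_neg (θ + (E j - Er) * τ)]
      congr 1
      ring
    rw [hcoseq] at hk
    have hq : (0:ℝ) ≤ ‖a j‖ ^ 2 := by positivity
    nlinarith [mul_le_mul_of_nonneg_left hk hq]
  have h₁ := Finset.sum_le_sum hb₁
  have h₂ := Finset.sum_le_sum hb₂
  rw [Finset.sum_sub_distrib] at h₁ h₂
  have hmul₁ : ∑ j ∈ s₁, A p θ * (‖a j‖ ^ 2 * (E j - Er) ^ p) * τ ^ p
      = A p θ * (∑ j ∈ s₁, ‖a j‖ ^ 2 * (E j - Er) ^ p) * τ ^ p := by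
    rw [Finset.mul_sum, Finset.sum_mul]
  have hmul₂ : ∑ j ∈ s₂, A p (-θ) * (‖a j‖ ^ 2 * (Er - E j) ^ p) * τ ^ p
      = A p (-θ) * (∑ j ∈ s₂, ‖a j‖ ^ 2 * (Er - E j) ^ p) * τ ^ p := by
    rw [Finset.mul_sum, Finset.sum_mul]
  have hcossum : (∑ j ∈ s₁, ‖a j‖ ^ 2 * Real.cos θ) + (∑ j ∈ s₂, ‖a j‖ ^ 2 * Real.cos θ)
      = Real.cos θ := by
    rw [← hsplit, ← Finset.sum_mul, ha, one_mul]
  have hsum' : ∑ j, ‖a j‖ ^ 2 * Real.cos (θ + (E j - Er) * τ)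
      = (∑ j ∈ s₁, ‖a j‖ ^ 2 * Real.cos (θ + (E j - Er) * τ))
        + (∑ j ∈ s₂, ‖a j‖ ^ 2 * Real.cos (θ + (E j - Er) * τ)) := hsplit _
  rw [← hs₂']
  rw [hmul₁] at h₁
  rw [hmul₂] at h₂
  have hfinal : Real.cos θ -
      (A p θ * (∑ j ∈ s₁, ‖a j‖ ^ 2 * (E j - Er) ^ p) +
        A p (-θ) * (∑ j ∈ s₂, ‖a j‖ ^ 2 * (Er - E j) ^ p)) * τ ^ p
      ≤ (c * z).re := by
    rw [hcz, hsum']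
    have hexp : (A p θ * (∑ j ∈ s₁, ‖a j‖ ^ 2 * (E j - Er) ^ p) +
        A p (-θ) * (∑ j ∈ s₂, ‖a j‖ ^ 2 * (Er - E j) ^ p)) * τ ^ p
        = A p θ * (∑ j ∈ s₁, ‖a j‖ ^ 2 * (E j - Er) ^ p) * τ ^ p
          + A p (-θ) * (∑ j ∈ s₂, ‖a j‖ ^ 2 * (Er - E j) ^ p) * τ ^ p := by ring
    rw [hexp]
    linarith
  linarith
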